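/- Maksa–Volkmann theorem: Let G be a group and E an inner product space. If f : G → E satisfies ‖f(x)+f(y)‖ ≤ ‖f(xy)‖ for all x, y ∈ G, then f(xy) = f(x)+f(y) for all x, y ∈ G. -/

import Mathlib

open scoped RealInnerProductSpace

theorem stmt17 {G E : Type*} [Group G] [NormedAddCommGroup E]
    [InnerProductSpace ℝ E] (f : G → E)
    (h : ∀ x y : G, ‖f x + f y‖ ≤ ‖f (x * y)‖) :
    ∀ x y : G, f (x * y) = f x + f y := by
  have h1 : f 1 = 0 := by
    have := h 1 1
    rw [one_mul] at this
    have h2 : ‖f 1 + f 1‖ = 2 * ‖f 1‖ := by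
      rw [← two_smul ℝ (f 1), norm_smul]; simp
    rw [h2] at this
    have : ‖f 1‖ ≤ 0 := by linarith
    simpa [norm_le_zero_iff] using this
  have hinv : ∀ z : G, f z⁻¹ = -f z := by
    intro z
    have := h z z⁻¹
    rw [mul_inv_cancel, h1, norm_zero] at this
    have : f z + f z⁻¹ = 0 := by simpa [norm_le_zero_iff] using this
    exact eq_neg_of_add_eq_zero_right this
  intro x y
  set a := f x with ha
  set b := f y with hb
  set c := f (x * y) with hc
  have I1 : ‖a + b‖ ≤ ‖c‖ := h x y
  have I2 : ‖c - b‖ ≤ ‖a‖ := by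
    have := h (x * y) y⁻¹
    rw [mul_inv_cancel_right, hinv, ← sub_eq_add_neg] at this
    exact this
  have I3 : ‖c - a‖ ≤ ‖b‖ := by
    have := h x⁻¹ (x * y)
    rw [inv_mul_cancel_left, hinv, neg_add_eq_sub] at this
    exact this
  have e1 : ‖c - b‖ ^ 2 = ‖c‖ ^ 2 - 2 * (inner ℝ c (b) : ℝ) + ‖b‖ ^ 2 := by
    rw [@norm_sub_sq_real]
  have e2 : ‖c - a‖ ^ 2 = ‖c‖ ^ 2 - 2 * (inner ℝ c (a) : ℝ) + ‖a‖ ^ 2 := by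
    rw [@norm_sub_sq_real]
  have e3 : ‖a + b‖ ^ 2 = ‖a‖ ^ 2 + 2 * (inner ℝ a (b) : ℝ) + ‖b‖ ^ 2 := by
    rw [@norm_add_sq_real]
  have e4 : ‖c - (a + b)‖ ^ 2 = ‖c‖ ^ 2 - 2 * ((inner ℝ c (a) : ℝ) + (inner ℝ c (b) : ℝ)) + ‖a + b‖ ^ 2 := by
    rw [@norm_sub_sq_real, inner_add_right]
  have cs : (inner ℝ c (a) : ℝ) + (inner ℝ c (b) : ℝ) ≤ ‖c‖ * ‖a + b‖ := by
    have := real_inner_le_norm c (a + b)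
    rwa [inner_add_right] at this
  -- square the inequalities
  have sq2 : ‖c - b‖ ^ 2 ≤ ‖a‖ ^ 2 := by
    have := mul_self_le_mul_self (norm_nonneg _) I2
    nlinarith
  have sq3 : ‖c - a‖ ^ 2 ≤ ‖b‖ ^ 2 := by
    have := mul_self_le_mul_self (norm_nonneg _) I3
    nlinarith
  -- from sq2 + sq3 : ‖c‖² ≤ ⟪c, a+b⟫
  have key : ‖c‖ ^ 2 ≤ (inner ℝ c (a) : ℝ) + (inner ℝ c (b) : ℝ) := by nlinarith
  have hab2 : ‖a + b‖ ^ 2 ≤ ‖c‖ ^ 2 := by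
    have := mul_self_le_mul_self (norm_nonneg _) I1
    nlinarith
  have hnorm : ‖c - (a + b)‖ ^ 2 ≤ 0 := by linarith
  have h0 : ‖c - (a + b)‖ ^ 2 = 0 := le_antisymm hnorm (sq_nonneg _)
  have hz : ‖c - (a + b)‖ = 0 := by
    exact pow_eq_zero_iff (two_ne_zero) |>.mp h0
  exact sub_eq_zero.mp (norm_eq_zero.mp hz)
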